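/- For every integer n ≥ 8 that is not of the form 2^{2k+1} - 1 for some integer k ≥ 1, we have S(n)/√n < √2. -/

import Mathlib

set_option maxRecDepth 40000
set_option maxHeartbeats 1000000

/-- `inv2 n` is the number of inversions in the binary representation of `n`,
i.e. the number of pairs of bit positions `a > b` such that bit `a` of `n` is `1`
and bit `b` of `n` is `0`. -/
def inv2 (n : ℕ) : ℕ :=
  ((Finset.range (n + 1) ×ˢ Finset.range (n + 1)).filter
    (fun p => p.2 < p.1 ∧ n.testBit p.1 = true ∧ n.testBit p.2 = false)).card

/-- `iSeq n = (-1)^(inv2 n)`. -/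
def iSeq (n : ℕ) : ℤ := (-1) ^ inv2 n


/-- The summatory function `S N = ∑_{0 ≤ n ≤ N} iSeq n`. -/
def S (N : ℕ) : ℤ := ∑ n ∈ Finset.range (N + 1), iSeq n

def ones (n : ℕ) : ℕ := ((Finset.range (n + 1)).filter (fun j => n.testBit j = true)).card
lemma tb_odd_zero (m : ℕ) : (2*m+1).testBit 0 = true := by
  simp [Nat.testBit_zero, Nat.mul_add_mod]
lemma tb_even_zero (m : ℕ) : (2*m).testBit 0 = false := by
  simp [Nat.testBit_zero, Nat.mul_mod_right]
lemma tb_odd_succ (m i : ℕ) : (2*m+1).testBit (i+1) = m.testBit i := by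
  rw [Nat.testBit_succ]; congr 1; omega
lemma tb_even_succ (m i : ℕ) : (2*m).testBit (i+1) = m.testBit i := by
  rw [Nat.testBit_succ]; congr 1; omega
lemma le_of_testBit {m j : ℕ} (h : m.testBit j = true) : j ≤ m := by
  by_contra hj
  have h2 : m < 2 ^ j := lt_of_lt_of_le (by omega) (Nat.le_of_lt (Nat.lt_two_pow_self (n := j)))
  rw [Nat.testBit_lt_two_pow h2] at h
  exact Bool.false_ne_true h

lemma ones_odd (m : ℕ) : ones (2*m+1) = ones m + 1 := by
  unfold ones
  have h : (Finset.range (2*m+1 + 1)).filter (fun j => (2*m+1).testBit j = true)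
      = insert 0 (((Finset.range (m + 1)).filter (fun j => m.testBit j = true)).image (· + 1)) := by
    ext x
    simp only [Finset.mem_filter, Finset.mem_range, Finset.mem_insert, Finset.mem_image]
    constructor
    · rintro ⟨hx, hb⟩
      rcases Nat.eq_zero_or_pos x with h0 | h0
      · exact Or.inl h0
      · obtain ⟨a, rfl⟩ := Nat.exists_eq_succ_of_ne_zero (show x ≠ 0 by omega)
        rw [tb_odd_succ] at hb
        have := le_of_testBit hb
        exact Or.inr ⟨a, ⟨by omega, hb⟩, rfl⟩
    · rintro (rfl | ⟨a, ⟨ha, hb⟩, rfl⟩)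
      · exact ⟨by omega, tb_odd_zero m⟩
      · refine ⟨by omega, ?_⟩
        rw [tb_odd_succ]; exact hb
  rw [h, Finset.card_insert_of_notMem (by simp),
    Finset.card_image_of_injective _ (fun a b hab => by omega)]

lemma ones_even (m : ℕ) : ones (2*m) = ones m := by
  rcases Nat.eq_zero_or_pos m with rfl | hm
  · rfl
  unfold ones
  have h : (Finset.range (2*m + 1)).filter (fun j => (2*m).testBit j = true)
      = ((Finset.range (m + 1)).filter (fun j => m.testBit j = true)).image (· + 1) := by
    ext x
    simp only [Finset.mem_filter, Finset.mem_range, Finset.mem_image]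
    constructor
    · rintro ⟨hx, hb⟩
      have h0 : x ≠ 0 := by
        intro h0; rw [h0, tb_even_zero] at hb; exact absurd hb (by simp)
      obtain ⟨a, rfl⟩ := Nat.exists_eq_succ_of_ne_zero h0
      rw [tb_even_succ] at hb
      have := le_of_testBit hb
      exact ⟨a, ⟨by omega, hb⟩, rfl⟩
    · rintro ⟨a, ⟨ha, hb⟩, rfl⟩
      refine ⟨by omega, ?_⟩
      rw [tb_even_succ]; exact hb
  rw [h, Finset.card_image_of_injective _ (fun a b hab => by omega)]

lemma inv2_even (m : ℕ) (hm : 1 ≤ m) : inv2 (2*m) = inv2 m + ones m := by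
  have key : inv2 (2*m) = ones m + inv2 m := by
    unfold inv2
    classical
    set s := ((Finset.range (2*m + 1) ×ˢ Finset.range (2*m + 1)).filter
      (fun p => p.2 < p.1 ∧ (2*m).testBit p.1 = true ∧ (2*m).testBit p.2 = false)) with hs
    have hsplit : (s.filter (fun p => p.2 = 0)).card + (s.filter (fun p => ¬ p.2 = 0)).card = s.card :=
      Finset.card_filter_add_card_filter_not _
    rw [← hsplit]
    congr 1
    · -- card of y = 0 part equals ones m
      rw [← ones_even m]
      unfold ones
      refine Finset.card_bij' (fun p _ => p.1) (fun a _ => (a, 0)) ?_ ?_ ?_ ?_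
      · rintro ⟨x, y⟩ hp
        simp only [Finset.mem_filter, Finset.mem_product, Finset.mem_range, hs] at hp ⊢
        obtain ⟨⟨⟨hx, hy⟩, hlt, hbx, hby⟩, hy0⟩ := hp
        exact ⟨hx, hbx⟩
      · rintro a ha
        simp only [Finset.mem_filter, Finset.mem_range, hs] at ha ⊢
        obtain ⟨ha1, ha2⟩ := ha
        have ha0 : a ≠ 0 := by
          intro h0; rw [h0, tb_even_zero] at ha2; exact absurd ha2 (by simp)
        constructor
        · simp only [Finset.mem_filter, Finset.mem_product, Finset.mem_range]
          exact ⟨⟨ha1, by omega⟩, by omega, ha2, tb_even_zero m⟩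
        · trivial
      · rintro ⟨x, y⟩ hp
        simp only [Finset.mem_filter, Finset.mem_product, Finset.mem_range, hs] at hp
        obtain ⟨-, hy0⟩ := hp
        simp only [Prod.mk.injEq]
        exact ⟨trivial, by omega⟩
      · rintro a _
        rfl
    · -- card of y ≥ 1 part equals inv2 m
      refine Finset.card_bij' (fun p _ => (p.1 - 1, p.2 - 1)) (fun p _ => (p.1 + 1, p.2 + 1))
        ?_ ?_ ?_ ?_
      · rintro ⟨x, y⟩ hp
        simp only [Finset.mem_filter, Finset.mem_product, Finset.mem_range, hs] at hp ⊢
        obtain ⟨⟨⟨hx, hy⟩, hlt, hbx, hby⟩, hy0⟩ := hp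
        obtain ⟨b, rfl⟩ := Nat.exists_eq_succ_of_ne_zero hy0
        obtain ⟨a, rfl⟩ := Nat.exists_eq_succ_of_ne_zero (show x ≠ 0 by omega)
        rw [tb_even_succ] at hbx hby
        have ha : a ≤ m := le_of_testBit hbx
        simp only [Nat.succ_sub_one]
        exact ⟨⟨by omega, by omega⟩, by omega, hbx, hby⟩
      · rintro ⟨x, y⟩ hp
        simp only [Finset.mem_filter, Finset.mem_product, Finset.mem_range, hs] at hp ⊢
        obtain ⟨⟨hx, hy⟩, hlt, hbx, hby⟩ := hp
        rw [← tb_even_succ m x] at hbx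
        rw [← tb_even_succ m y] at hby
        exact ⟨⟨⟨by omega, by omega⟩, by omega, hbx, hby⟩, by omega⟩
      · rintro ⟨x, y⟩ hp
        simp only [Finset.mem_filter, Finset.mem_product, Finset.mem_range, hs] at hp
        obtain ⟨⟨⟨hx, hy⟩, hlt, hbx, hby⟩, hy0⟩ := hp
        simp only [Prod.mk.injEq]
        constructor <;> omega
      · rintro ⟨x, y⟩ _
        simp
  omega

lemma inv2_odd (m : ℕ) : inv2 (2*m+1) = inv2 m := by
  unfold inv2
  refine Finset.card_bij' (fun p _ => (p.1 - 1, p.2 - 1)) (fun p _ => (p.1 + 1, p.2 + 1))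
    ?_ ?_ ?_ ?_
  · rintro ⟨x, y⟩ hp
    simp only [Finset.mem_filter, Finset.mem_product, Finset.mem_range] at hp ⊢
    obtain ⟨⟨hx, hy⟩, hlt, hbx, hby⟩ := hp
    have hy0 : y ≠ 0 := by
      intro h0; rw [h0, tb_odd_zero] at hby; exact absurd hby (by simp)
    obtain ⟨b, rfl⟩ := Nat.exists_eq_succ_of_ne_zero hy0
    obtain ⟨a, rfl⟩ := Nat.exists_eq_succ_of_ne_zero (show x ≠ 0 by omega)
    rw [tb_odd_succ] at hbx hby
    have ha : a ≤ m := le_of_testBit hbx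
    simp only [Nat.succ_sub_one]
    exact ⟨⟨by omega, by omega⟩, by omega, hbx, hby⟩
  · rintro ⟨x, y⟩ hp
    simp only [Finset.mem_filter, Finset.mem_product, Finset.mem_range] at hp ⊢
    obtain ⟨⟨hx, hy⟩, hlt, hbx, hby⟩ := hp
    rw [← tb_odd_succ m x] at hbx
    rw [← tb_odd_succ m y] at hby
    exact ⟨⟨by omega, by omega⟩, by omega, hbx, hby⟩
  · rintro ⟨x, y⟩ hp
    simp only [Finset.mem_filter, Finset.mem_product, Finset.mem_range] at hp
    obtain ⟨⟨hx, hy⟩, hlt, hbx, hby⟩ := hp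
    have hy0 : y ≠ 0 := by
      intro h0; rw [h0, tb_odd_zero] at hby; exact absurd hby (by simp)
    simp only [Prod.mk.injEq]
    constructor <;> omega
  · rintro ⟨x, y⟩ _
    simp


def tI (n : ℕ) : ℤ := (-1) ^ ones n

def V (N : ℕ) : ℤ := ∑ n ∈ Finset.range (N + 1), iSeq n * tI n

lemma iSeq_pm (n : ℕ) : iSeq n = 1 ∨ iSeq n = -1 := by
  unfold iSeq
  rcases Nat.even_or_odd (inv2 n) with h | h
  · exact Or.inl h.neg_one_pow
  · exact Or.inr h.neg_one_pow

lemma tI_pm (n : ℕ) : tI n = 1 ∨ tI n = -1 := by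
  unfold tI
  rcases Nat.even_or_odd (ones n) with h | h
  · exact Or.inl h.neg_one_pow
  · exact Or.inr h.neg_one_pow

lemma tI_sq (n : ℕ) : tI n * tI n = 1 := by
  rcases tI_pm n with h | h <;> rw [h] <;> norm_num

lemma tI_odd (m : ℕ) : tI (2*m+1) = -tI m := by
  unfold tI; rw [ones_odd, pow_succ]; ring

lemma tI_even (m : ℕ) : tI (2*m) = tI m := by
  unfold tI; rw [ones_even]

lemma iSeq_odd (m : ℕ) : iSeq (2*m+1) = iSeq m := by
  unfold iSeq; rw [inv2_odd]

lemma iSeq_even (m : ℕ) (hm : 1 ≤ m) : iSeq (2*m) = iSeq m * tI m := by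
  unfold iSeq tI; rw [inv2_even m hm, pow_add]

lemma S_succ (N : ℕ) : S (N+1) = S N + iSeq (N+1) := Finset.sum_range_succ _ _

lemma V_succ (N : ℕ) : V (N+1) = V N + iSeq (N+1) * tI (N+1) := Finset.sum_range_succ _ _

lemma SV (N : ℕ) : S (2*N+1) = S N + V N ∧ V (2*N+1) = S N - V N := by
  induction N with
  | zero => constructor <;> decide
  | succ n ih =>
    obtain ⟨ih1, ih2⟩ := ih
    have hA : S (2*(n+1)+1) = S (2*n+1) + iSeq (2*(n+1)) + iSeq (2*(n+1)+1) := by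
      have h1 : 2*(n+1)+1 = (2*(n+1)) + 1 := rfl
      have h2 : 2*(n+1) = (2*n+1) + 1 := by ring
      rw [h1, S_succ, h2, S_succ, ← h2, ← h1]
    have hB : V (2*(n+1)+1) = V (2*n+1) + iSeq (2*(n+1)) * tI (2*(n+1))
        + iSeq (2*(n+1)+1) * tI (2*(n+1)+1) := by
      have h1 : 2*(n+1)+1 = (2*(n+1)) + 1 := rfl
      have h2 : 2*(n+1) = (2*n+1) + 1 := by ring
      rw [h1, V_succ, h2, V_succ, ← h2, ← h1]
    rw [iSeq_even (n+1) (by omega), iSeq_odd (n+1)] at hA hB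
    rw [tI_even (n+1), tI_odd (n+1)] at hB
    constructor
    · rw [hA, ih1, S_succ, V_succ]
      ring
    · rw [hB, ih2, S_succ, V_succ]
      linear_combination (iSeq (n+1)) * tI_sq (n+1)

lemma S_even2 (N : ℕ) : S (2*N) = S N + V N - iSeq N := by
  have h := (SV N).1
  have h2 : S (2*N+1) = S (2*N) + iSeq (2*N+1) := S_succ (2*N)
  rw [iSeq_odd] at h2
  linarith

lemma V_even2 (N : ℕ) : V (2*N) = S N - V N + iSeq N * tI N := by
  have h := (SV N).2
  have h2 : V (2*N+1) = V (2*N) + iSeq (2*N+1) * tI (2*N+1) := V_succ (2*N)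
  rw [iSeq_odd, tI_odd] at h2
  have h3 : iSeq N * -tI N = -(iSeq N * tI N) := by ring
  rw [h3] at h2
  linarith

lemma S40 (q : ℕ) (hq : 1 ≤ q) : S (4*q) = 2*S q - iSeq q := by
  have h : 4*q = 2*(2*q) := by ring
  rw [h, S_even2 (2*q), S_even2 q, V_even2 q, iSeq_even q hq]
  ring

lemma S41 (q : ℕ) : S (4*q+1) = 2*S q - iSeq q + iSeq q * tI q := by
  have h : 4*q+1 = 2*(2*q)+1 := by ring
  rw [h, (SV (2*q)).1, S_even2 q, V_even2 q]
  ring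

lemma S42 (q : ℕ) : S (4*q+2) = 2*S q - iSeq q := by
  have h : 4*q+2 = 2*(2*q+1) := by ring
  rw [h, S_even2 (2*q+1), (SV q).1, (SV q).2, iSeq_odd q]
  ring

lemma S43 (q : ℕ) : S (4*q+3) = 2*S q := by
  have h : 4*q+3 = 2*(2*q+1)+1 := by ring
  rw [h, (SV (2*q+1)).1, (SV q).1, (SV q).2]
  ring

lemma i40 (q : ℕ) (hq : 1 ≤ q) : iSeq (4*q) = iSeq q := by
  have h : 4*q = 2*(2*q) := by ring
  rw [h, iSeq_even (2*q) (by omega), iSeq_even q hq, tI_even q, mul_assoc, tI_sq, mul_one]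

lemma i41 (q : ℕ) (hq : 1 ≤ q) : iSeq (4*q+1) = iSeq q * tI q := by
  have h : 4*q+1 = 2*(2*q)+1 := by ring
  rw [h, iSeq_odd (2*q), iSeq_even q hq]

lemma i42 (q : ℕ) : iSeq (4*q+2) = -(iSeq q * tI q) := by
  have h : 4*q+2 = 2*(2*q+1) := by ring
  rw [h, iSeq_even (2*q+1) (by omega), iSeq_odd q, tI_odd q]
  ring

lemma i43 (q : ℕ) : iSeq (4*q+3) = iSeq q := by
  have h : 4*q+3 = 2*(2*q+1)+1 := by ring
  rw [h, iSeq_odd (2*q+1), iSeq_odd q]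

lemma t40 (q : ℕ) : tI (4*q) = tI q := by
  have h : 4*q = 2*(2*q) := by ring
  rw [h, tI_even (2*q), tI_even q]

lemma t41 (q : ℕ) : tI (4*q+1) = -tI q := by
  have h : 4*q+1 = 2*(2*q)+1 := by ring
  rw [h, tI_odd (2*q), tI_even q]

lemma t42 (q : ℕ) : tI (4*q+2) = -tI q := by
  have h : 4*q+2 = 2*(2*q+1) := by ring
  rw [h, tI_even (2*q+1), tI_odd q]

lemma t43 (q : ℕ) : tI (4*q+3) = tI q := by
  have h : 4*q+3 = 2*(2*q+1)+1 := by ring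
  rw [h, tI_odd (2*q+1), tI_odd q]
  ring

def GoodInv (N : ℕ) : Prop :=
  1 ≤ S N ∧
  (tI N = 1 → (S N)^2 ≤ 2*(N:ℤ) - 2) ∧
  (iSeq N = -1 → (S N)^2 + 2*S N ≤ 2*(N:ℤ) - 1) ∧
  (tI N = -1 → iSeq N = 1 → (2 ≤ S N ∧ (S N)^2 ≤ 2*(N:ℤ) + 2 ∧
     (5 ≤ N → 2*(N:ℤ) - 1 ≤ (S N)^2 → ∃ k : ℕ, N = 2^(2*k+1) - 1 ∧ S N = 2^(k+1))))

lemma goodInv_all : ∀ N : ℕ, 2 ≤ N → GoodInv N := by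
  intro N
  induction N using Nat.strong_induction_on with
  | _ N ih =>
  intro hN
  by_cases h20 : N < 20
  · interval_cases N <;>
      exact ⟨by decide,
        by first
          | (intro ht; exact absurd ht (by decide))
          | (intro _; decide),
        by first
          | (intro ha; exact absurd ha (by decide))
          | (intro _; decide),
        by first
          | (intro ht; exact absurd ht (by decide))
          | (intro ht ha; exact absurd ha (by decide))
          | (intro ht ha; exact ⟨by decide, by decide, fun h5 htr => absurd h5 (by decide)⟩)
          | (intro ht ha; exact ⟨by decide, by decide, fun h5 htr => absurd htr (by decide)⟩)
          | (intro ht ha; exact ⟨by decide, by decide, fun h5 htr => ⟨1, by norm_num, by decide⟩⟩)⟩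
  · push_neg at h20
    set q := N / 4 with hqdef
    have hq5 : 5 ≤ q := by omega
    have hr : N % 4 < 4 := Nat.mod_lt _ (by omega)
    obtain ⟨h0, h1, h3, h2⟩ := ih q (by omega) (by omega)
    have hcase : N = 4*q ∨ N = 4*q+1 ∨ N = 4*q+2 ∨ N = 4*q+3 := by omega

    rcases hcase with h4 | h4 | h4 | h4 <;> rw [h4]
    · rcases iSeq_pm q with ha | ha <;> rcases tI_pm q with ht | ht
      · -- r=0, a=1, t=1: S'=2*S q - 1, I'=1, T'=1
        have eS : S (4*q) = 2*S q - 1 := by rw [S40 q (by omega), ha] <;> ring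
        have eI : iSeq (4*q) = (1 : ℤ) := by rw [i40 q (by omega), ha] <;> norm_num
        have eT : tI (4*q) = (1 : ℤ) := by rw [t40 q, ht] <;> norm_num
        have hP1 : (S q)^2 ≤ 2*(q:ℤ) - 2 := h1 ht
        refine ⟨?_, ?_, ?_, ?_⟩
        · rw [eS]; linarith [h0, hP1]
        · intro _; rw [eS]; push_cast; nlinarith [h0, hP1]
        · intro hc; rw [eI] at hc; norm_num at hc
        · intro hc; rw [eT] at hc; norm_num at hc
      · -- r=0, a=1, t=-1: S'=2*S q - 1, I'=1, T'=-1
        have eS : S (4*q) = 2*S q - 1 := by rw [S40 q (by omega), ha] <;> ring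
        have eI : iSeq (4*q) = (1 : ℤ) := by rw [i40 q (by omega), ha] <;> norm_num
        have eT : tI (4*q) = (-1 : ℤ) := by rw [t40 q, ht] <;> norm_num
        obtain ⟨hs2, hsb, hchar⟩ := h2 ht ha
        refine ⟨?_, ?_, ?_, ?_⟩
        · rw [eS]; linarith [h0, hs2, hsb]
        · intro hc; rw [eT] at hc; norm_num at hc
        · intro hc; rw [eI] at hc; norm_num at hc
        · intro _ _
          refine ⟨by rw [eS]; linarith [h0, hs2, hsb], by rw [eS]; push_cast; nlinarith [h0, hs2, hsb], ?_⟩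
          intro h5 htrig
          rw [eS] at htrig; push_cast at htrig
          have hq' : (5:ℤ) ≤ (q:ℤ) := by exact_mod_cast hq5
          have h4s : 4*S q ≤ 10 := by nlinarith [hsb, htrig]
          have hsle : S q ≤ 2 := by omega
          have hseq : S q = 2 := le_antisymm hsle hs2
          rw [hseq] at htrig; norm_num at htrig; exfalso; linarith
      · -- r=0, a=-1, t=1: S'=2*S q + 1, I'=-1, T'=1
        have eS : S (4*q) = 2*S q + 1 := by rw [S40 q (by omega), ha] <;> ring
        have eI : iSeq (4*q) = (-1 : ℤ) := by rw [i40 q (by omega), ha] <;> norm_num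
        have eT : tI (4*q) = (1 : ℤ) := by rw [t40 q, ht] <;> norm_num
        have hP1 : (S q)^2 ≤ 2*(q:ℤ) - 2 := h1 ht
        have hP3 : (S q)^2 + 2*S q ≤ 2*(q:ℤ) - 1 := h3 ha
        refine ⟨?_, ?_, ?_, ?_⟩
        · rw [eS]; linarith [h0, hP1, hP3]
        · intro _; rw [eS]; push_cast; nlinarith [h0, hP1, hP3]
        · intro _; rw [eS]; push_cast; nlinarith [h0, hP1, hP3]
        · intro hc; rw [eT] at hc; norm_num at hc
      · -- r=0, a=-1, t=-1: S'=2*S q + 1, I'=-1, T'=-1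
        have eS : S (4*q) = 2*S q + 1 := by rw [S40 q (by omega), ha] <;> ring
        have eI : iSeq (4*q) = (-1 : ℤ) := by rw [i40 q (by omega), ha] <;> norm_num
        have eT : tI (4*q) = (-1 : ℤ) := by rw [t40 q, ht] <;> norm_num
        have hP3 : (S q)^2 + 2*S q ≤ 2*(q:ℤ) - 1 := h3 ha
        refine ⟨?_, ?_, ?_, ?_⟩
        · rw [eS]; linarith [h0, hP3]
        · intro hc; rw [eT] at hc; norm_num at hc
        · intro _; rw [eS]; push_cast; nlinarith [h0, hP3]
        · intro _ hc; rw [eI] at hc; norm_num at hc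
    · rcases iSeq_pm q with ha | ha <;> rcases tI_pm q with ht | ht
      · -- r=1, a=1, t=1: S'=2*S q, I'=1, T'=-1
        have eS : S (4*q+1) = 2*S q := by rw [S41 q, ha, ht] <;> ring
        have eI : iSeq (4*q+1) = (1 : ℤ) := by rw [i41 q (by omega), ha, ht] <;> norm_num
        have eT : tI (4*q+1) = (-1 : ℤ) := by rw [t41 q, ht] <;> norm_num
        have hP1 : (S q)^2 ≤ 2*(q:ℤ) - 2 := h1 ht
        refine ⟨?_, ?_, ?_, ?_⟩
        · rw [eS]; linarith [h0, hP1]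
        · intro hc; rw [eT] at hc; norm_num at hc
        · intro hc; rw [eI] at hc; norm_num at hc
        · intro _ _
          refine ⟨by rw [eS]; linarith [h0, hP1], by rw [eS]; push_cast; nlinarith [h0, hP1], ?_⟩
          intro h5 htrig
          rw [eS] at htrig; push_cast at htrig
          exfalso; nlinarith [h0, hP1, htrig]
      · -- r=1, a=1, t=-1: S'=2*S q - 2, I'=-1, T'=1
        have eS : S (4*q+1) = 2*S q - 2 := by rw [S41 q, ha, ht] <;> ring
        have eI : iSeq (4*q+1) = (-1 : ℤ) := by rw [i41 q (by omega), ha, ht] <;> norm_num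
        have eT : tI (4*q+1) = (1 : ℤ) := by rw [t41 q, ht] <;> norm_num
        obtain ⟨hs2, hsb, hchar⟩ := h2 ht ha
        refine ⟨?_, ?_, ?_, ?_⟩
        · rw [eS]; linarith [h0, hs2, hsb]
        · intro _; rw [eS]; push_cast; nlinarith [h0, hs2, hsb]
        · intro _; rw [eS]; push_cast; nlinarith [h0, hs2, hsb]
        · intro hc; rw [eT] at hc; norm_num at hc
      · -- r=1, a=-1, t=1: S'=2*S q, I'=-1, T'=-1
        have eS : S (4*q+1) = 2*S q := by rw [S41 q, ha, ht] <;> ring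
        have eI : iSeq (4*q+1) = (-1 : ℤ) := by rw [i41 q (by omega), ha, ht] <;> norm_num
        have eT : tI (4*q+1) = (-1 : ℤ) := by rw [t41 q, ht] <;> norm_num
        have hP1 : (S q)^2 ≤ 2*(q:ℤ) - 2 := h1 ht
        have hP3 : (S q)^2 + 2*S q ≤ 2*(q:ℤ) - 1 := h3 ha
        refine ⟨?_, ?_, ?_, ?_⟩
        · rw [eS]; linarith [h0, hP1, hP3]
        · intro hc; rw [eT] at hc; norm_num at hc
        · intro _; rw [eS]; push_cast; nlinarith [h0, hP1, hP3]
        · intro _ hc; rw [eI] at hc; norm_num at hc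
      · -- r=1, a=-1, t=-1: S'=2*S q + 2, I'=1, T'=1
        have eS : S (4*q+1) = 2*S q + 2 := by rw [S41 q, ha, ht] <;> ring
        have eI : iSeq (4*q+1) = (1 : ℤ) := by rw [i41 q (by omega), ha, ht] <;> norm_num
        have eT : tI (4*q+1) = (1 : ℤ) := by rw [t41 q, ht] <;> norm_num
        have hP3 : (S q)^2 + 2*S q ≤ 2*(q:ℤ) - 1 := h3 ha
        refine ⟨?_, ?_, ?_, ?_⟩
        · rw [eS]; linarith [h0, hP3]
        · intro _; rw [eS]; push_cast; nlinarith [h0, hP3]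
        · intro hc; rw [eI] at hc; norm_num at hc
        · intro hc; rw [eT] at hc; norm_num at hc
    · rcases iSeq_pm q with ha | ha <;> rcases tI_pm q with ht | ht
      · -- r=2, a=1, t=1: S'=2*S q - 1, I'=-1, T'=-1
        have eS : S (4*q+2) = 2*S q - 1 := by rw [S42 q, ha] <;> ring
        have eI : iSeq (4*q+2) = (-1 : ℤ) := by rw [i42 q, ha, ht] <;> norm_num
        have eT : tI (4*q+2) = (-1 : ℤ) := by rw [t42 q, ht] <;> norm_num
        have hP1 : (S q)^2 ≤ 2*(q:ℤ) - 2 := h1 ht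
        refine ⟨?_, ?_, ?_, ?_⟩
        · rw [eS]; linarith [h0, hP1]
        · intro hc; rw [eT] at hc; norm_num at hc
        · intro _; rw [eS]; push_cast; nlinarith [h0, hP1]
        · intro _ hc; rw [eI] at hc; norm_num at hc
      · -- r=2, a=1, t=-1: S'=2*S q - 1, I'=1, T'=1
        have eS : S (4*q+2) = 2*S q - 1 := by rw [S42 q, ha] <;> ring
        have eI : iSeq (4*q+2) = (1 : ℤ) := by rw [i42 q, ha, ht] <;> norm_num
        have eT : tI (4*q+2) = (1 : ℤ) := by rw [t42 q, ht] <;> norm_num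
        obtain ⟨hs2, hsb, hchar⟩ := h2 ht ha
        refine ⟨?_, ?_, ?_, ?_⟩
        · rw [eS]; linarith [h0, hs2, hsb]
        · intro _; rw [eS]; push_cast; nlinarith [h0, hs2, hsb]
        · intro hc; rw [eI] at hc; norm_num at hc
        · intro hc; rw [eT] at hc; norm_num at hc
      · -- r=2, a=-1, t=1: S'=2*S q + 1, I'=1, T'=-1
        have eS : S (4*q+2) = 2*S q + 1 := by rw [S42 q, ha] <;> ring
        have eI : iSeq (4*q+2) = (1 : ℤ) := by rw [i42 q, ha, ht] <;> norm_num
        have eT : tI (4*q+2) = (-1 : ℤ) := by rw [t42 q, ht] <;> norm_num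
        have hP1 : (S q)^2 ≤ 2*(q:ℤ) - 2 := h1 ht
        have hP3 : (S q)^2 + 2*S q ≤ 2*(q:ℤ) - 1 := h3 ha
        refine ⟨?_, ?_, ?_, ?_⟩
        · rw [eS]; linarith [h0, hP1, hP3]
        · intro hc; rw [eT] at hc; norm_num at hc
        · intro hc; rw [eI] at hc; norm_num at hc
        · intro _ _
          refine ⟨by rw [eS]; linarith [h0, hP1, hP3], by rw [eS]; push_cast; nlinarith [h0, hP1, hP3], ?_⟩
          intro h5 htrig
          rw [eS] at htrig; push_cast at htrig
          exfalso; nlinarith [h0, hP1, hP3, htrig]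
      · -- r=2, a=-1, t=-1: S'=2*S q + 1, I'=-1, T'=1
        have eS : S (4*q+2) = 2*S q + 1 := by rw [S42 q, ha] <;> ring
        have eI : iSeq (4*q+2) = (-1 : ℤ) := by rw [i42 q, ha, ht] <;> norm_num
        have eT : tI (4*q+2) = (1 : ℤ) := by rw [t42 q, ht] <;> norm_num
        have hP3 : (S q)^2 + 2*S q ≤ 2*(q:ℤ) - 1 := h3 ha
        refine ⟨?_, ?_, ?_, ?_⟩
        · rw [eS]; linarith [h0, hP3]
        · intro _; rw [eS]; push_cast; nlinarith [h0, hP3]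
        · intro _; rw [eS]; push_cast; nlinarith [h0, hP3]
        · intro hc; rw [eT] at hc; norm_num at hc
    · rcases iSeq_pm q with ha | ha <;> rcases tI_pm q with ht | ht
      · -- r=3, a=1, t=1: S'=2*S q, I'=1, T'=1
        have eS : S (4*q+3) = 2*S q := by rw [S43 q]
        have eI : iSeq (4*q+3) = (1 : ℤ) := by rw [i43 q, ha] <;> norm_num
        have eT : tI (4*q+3) = (1 : ℤ) := by rw [t43 q, ht] <;> norm_num
        have hP1 : (S q)^2 ≤ 2*(q:ℤ) - 2 := h1 ht
        refine ⟨?_, ?_, ?_, ?_⟩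
        · rw [eS]; linarith [h0, hP1]
        · intro _; rw [eS]; push_cast; nlinarith [h0, hP1]
        · intro hc; rw [eI] at hc; norm_num at hc
        · intro hc; rw [eT] at hc; norm_num at hc
      · -- r=3, a=1, t=-1: S'=2*S q, I'=1, T'=-1
        have eS : S (4*q+3) = 2*S q := by rw [S43 q]
        have eI : iSeq (4*q+3) = (1 : ℤ) := by rw [i43 q, ha] <;> norm_num
        have eT : tI (4*q+3) = (-1 : ℤ) := by rw [t43 q, ht] <;> norm_num
        obtain ⟨hs2, hsb, hchar⟩ := h2 ht ha
        refine ⟨?_, ?_, ?_, ?_⟩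
        · rw [eS]; linarith [h0, hs2, hsb]
        · intro hc; rw [eT] at hc; norm_num at hc
        · intro hc; rw [eI] at hc; norm_num at hc
        · intro _ _
          refine ⟨by rw [eS]; linarith [h0, hs2, hsb], by rw [eS]; push_cast; nlinarith [h0, hs2, hsb], ?_⟩
          intro h5 htrig
          rw [eS] at htrig; push_cast at htrig
          have hZ2 : 2*(q:ℤ)+1 < (S q)^2 := by nlinarith [htrig]
          have hZ3 : 2*(q:ℤ)+2 ≤ (S q)^2 := by linarith [Int.add_one_le_of_lt hZ2]
          have hEq : (S q)^2 = 2*(q:ℤ)+2 := le_antisymm hsb hZ3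
          obtain ⟨k, hk1, hk2⟩ := hchar (by omega) (by linarith)
          refine ⟨k+1, ?_, ?_⟩
          · have hpow : (2:ℕ)^(2*(k+1)+1) = 2^(2*k+1) * 4 := by
              rw [show 2*(k+1)+1 = (2*k+1)+2 by ring, pow_add]; norm_num
            have h1p : 1 ≤ (2:ℕ)^(2*k+1) := Nat.one_le_two_pow
            omega
          · rw [eS, hk2, pow_succ]; ring
      · -- r=3, a=-1, t=1: S'=2*S q, I'=-1, T'=1
        have eS : S (4*q+3) = 2*S q := by rw [S43 q]
        have eI : iSeq (4*q+3) = (-1 : ℤ) := by rw [i43 q, ha] <;> norm_num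
        have eT : tI (4*q+3) = (1 : ℤ) := by rw [t43 q, ht] <;> norm_num
        have hP1 : (S q)^2 ≤ 2*(q:ℤ) - 2 := h1 ht
        have hP3 : (S q)^2 + 2*S q ≤ 2*(q:ℤ) - 1 := h3 ha
        refine ⟨?_, ?_, ?_, ?_⟩
        · rw [eS]; linarith [h0, hP1, hP3]
        · intro _; rw [eS]; push_cast; nlinarith [h0, hP1, hP3]
        · intro _; rw [eS]; push_cast; nlinarith [h0, hP1, hP3]
        · intro hc; rw [eT] at hc; norm_num at hc
      · -- r=3, a=-1, t=-1: S'=2*S q, I'=-1, T'=-1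
        have eS : S (4*q+3) = 2*S q := by rw [S43 q]
        have eI : iSeq (4*q+3) = (-1 : ℤ) := by rw [i43 q, ha] <;> norm_num
        have eT : tI (4*q+3) = (-1 : ℤ) := by rw [t43 q, ht] <;> norm_num
        have hP3 : (S q)^2 + 2*S q ≤ 2*(q:ℤ) - 1 := h3 ha
        refine ⟨?_, ?_, ?_, ?_⟩
        · rw [eS]; linarith [h0, hP3]
        · intro hc; rw [eT] at hc; norm_num at hc
        · intro _; rw [eS]; push_cast; nlinarith [h0, hP3]
        · intro _ hc; rw [eI] at hc; norm_num at hc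
theorem summatory_strict_upper_bound (n : ℕ) (hn : 8 ≤ n)
    (h : ¬ ∃ k : ℕ, 1 ≤ k ∧ n = 2 ^ (2 * k + 1) - 1) :
    (S n : ℝ) / Real.sqrt n < Real.sqrt 2 := by
  obtain ⟨h0, h1, h3, h2⟩ := goodInv_all n (by omega)
  have key : (S n)^2 ≤ 2*(n:ℤ) - 2 := by
    rcases tI_pm n with ht | ht
    · exact h1 ht
    · rcases iSeq_pm n with ha | ha
      · obtain ⟨hs2, hsb, hchar⟩ := h2 ht ha
        by_contra hcon
        push_neg at hcon
        have htr : 2*(n:ℤ) - 1 ≤ (S n)^2 := by linarith [Int.add_one_le_of_lt hcon]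
        obtain ⟨k, hk1, hk2⟩ := hchar (by omega) htr
        rcases Nat.eq_zero_or_pos k with rfl | hk
        · norm_num at hk1; omega
        · exact h ⟨k, hk, hk1⟩
      · have hP3 := h3 ha
        nlinarith [h0]
  have hS1 : (1:ℝ) ≤ (S n : ℝ) := by exact_mod_cast h0
  have hn8 : (8:ℝ) ≤ (n:ℝ) := by exact_mod_cast hn
  have hsqrtn : (0:ℝ) < Real.sqrt n := Real.sqrt_pos.mpr (by linarith)
  have hsq : ((S n : ℝ))^2 < 2*(n:ℝ) := by
    have : ((S n)^2 : ℤ) < 2*(n:ℤ) := by omega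
    exact_mod_cast this
  have hlt : (S n : ℝ) < Real.sqrt (2*(n:ℝ)) := by
    rw [show ((S n : ℤ) : ℝ) = ((S n : ℤ) : ℝ) from rfl]
    exact (Real.lt_sqrt (by linarith)).mpr hsq
  rw [div_lt_iff₀ hsqrtn]
  calc (S n : ℝ) < Real.sqrt (2*(n:ℝ)) := hlt
    _ = Real.sqrt 2 * Real.sqrt n := Real.sqrt_mul (by norm_num) _
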